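/- The sesquilinear form ⟨z̄^i z^j, z̄^n z^m⟩ = s_{i+m}·δ_{i−j,n−m} on ℂ[z,z̄] is positive semidefinite if and only if both families of Hankel matrices (s_{i+j})_{0≤i,j≤n} and (s_{i+j+1})_{0≤i,j≤n} are positive semidefinite for all n (the Stieltjes moment condition). -/

import Mathlib

open MvPolynomial Finset


section helpers
variable {n : ℕ}

private lemma quad_re_nonneg {n : ℕ} {M : Matrix (Fin n) (Fin n) ℝ} (hM : M.PosSemidef)
    (x : Fin n → ℂ) :
    0 ≤ (∑ i, ∑ j, (starRingEnd ℂ) (x i) * x j * (M i j : ℂ)).re := by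
  have e : ∀ a : Fin n → ℝ, ∑ i, ∑ j, a i * a j * M i j = dotProduct a (M.mulVec a) := by
    intro a
    simp only [dotProduct, Matrix.mulVec, Finset.mul_sum]
    refine Finset.sum_congr rfl fun i _ => Finset.sum_congr rfl fun j _ => by ring
  have h1 := hM.dotProduct_mulVec_nonneg (fun i => (x i).re)
  have h2 := hM.dotProduct_mulVec_nonneg (fun i => (x i).im)
  rw [star_trivial, ← e] at h1 h2
  have hre : (∑ i, ∑ j, (starRingEnd ℂ) (x i) * x j * (M i j : ℂ)).re
      = (∑ i, ∑ j, (x i).re * (x j).re * M i j) + (∑ i, ∑ j, (x i).im * (x j).im * M i j) := by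
    rw [Complex.re_sum, ← Finset.sum_add_distrib]
    refine Finset.sum_congr rfl fun i _ => ?_
    rw [Complex.re_sum, ← Finset.sum_add_distrib]
    refine Finset.sum_congr rfl fun j _ => ?_
    simp [Complex.mul_re, Complex.conj_re, Complex.conj_im, Complex.ofReal_re,
      Complex.ofReal_im]
    ring
  rw [hre]
  exact add_nonneg h1 h2

private lemma shifted_psd (s : ℕ → ℝ)
    (hE : ∀ n : ℕ, (Matrix.of fun i j : Fin (n + 1) => s ((i : ℕ) + (j : ℕ))).PosSemidef)
    (hO : ∀ n : ℕ, (Matrix.of fun i j : Fin (n + 1) => s ((i : ℕ) + (j : ℕ) + 1)).PosSemidef)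
    (d N : ℕ) : (Matrix.of fun i j : Fin (N + 1) => s ((i : ℕ) + (j : ℕ) + d)).PosSemidef := by
  obtain ⟨k, hk⟩ : ∃ k, d = 2 * k ∨ d = 2 * k + 1 := ⟨d / 2, by omega⟩
  set e : Fin (N + 1) → Fin (N + k + 1) := fun i => ⟨(i : ℕ) + k, by omega⟩ with he
  rcases hk with h | h
  · have h2 := (hE (N + k)).submatrix e
    have heq : (Matrix.of fun i j : Fin (N + 1) => s ((i : ℕ) + (j : ℕ) + d)) =
        (Matrix.of fun i j : Fin (N + k + 1) => s ((i : ℕ) + (j : ℕ))).submatrix e e := by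
      ext i j
      simp only [Matrix.submatrix_apply, Matrix.of_apply, he]
      congr 1
      omega
    rw [heq]; exact h2
  · have h2 := (hO (N + k)).submatrix e
    have heq : (Matrix.of fun i j : Fin (N + 1) => s ((i : ℕ) + (j : ℕ) + d)) =
        (Matrix.of fun i j : Fin (N + k + 1) => s ((i : ℕ) + (j : ℕ) + 1)).submatrix e e := by
      ext i j
      simp only [Matrix.submatrix_apply, Matrix.of_apply, he]
      congr 1
      omega
    rw [heq]; exact h2

private lemma quad_shift (s : ℕ → ℝ)
    (hE : ∀ n : ℕ, (Matrix.of fun i j : Fin (n + 1) => s ((i : ℕ) + (j : ℕ))).PosSemidef)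
    (hO : ∀ n : ℕ, (Matrix.of fun i j : Fin (n + 1) => s ((i : ℕ) + (j : ℕ) + 1)).PosSemidef)
    (d N : ℕ) (x : Fin (N + 1) → ℂ) :
    0 ≤ (∑ k, ∑ l, (starRingEnd ℂ) (x k) * x l * (s ((k : ℕ) + (l : ℕ) + d) : ℂ)).re :=
  quad_re_nonneg (shifted_psd s hE hO d N) x

private lemma sum_collect {ι κ : Type*} [DecidableEq κ] (T : Finset ι) (t : Finset κ)
    (φ : ι → κ) (hφ : ∀ u ∈ T, φ u ∈ t) (c : ι → ℂ) (g : κ → ℂ) :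
    ∑ u ∈ T, c u * g (φ u) = ∑ k ∈ t, (∑ u ∈ T.filter (fun u => φ u = k), c u) * g k := by
  rw [← Finset.sum_fiberwise_of_maps_to hφ (fun u => c u * g (φ u))]
  refine Finset.sum_congr rfl fun k _ => ?_
  rw [Finset.sum_mul]
  exact Finset.sum_congr rfl fun u hu => by rw [(Finset.mem_filter.mp hu).2]

/-- The key grouping lemma: a fixed-difference block of the form is nonnegative. -/
private lemma group_nonneg (s : ℕ → ℝ)
    (hE : ∀ n : ℕ, (Matrix.of fun i j : Fin (n + 1) => s ((i : ℕ) + (j : ℕ))).PosSemidef)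
    (hO : ∀ n : ℕ, (Matrix.of fun i j : Fin (n + 1) => s ((i : ℕ) + (j : ℕ) + 1)).PosSemidef)
    {ι : Type*} [DecidableEq ι] (T : Finset ι) (c : ι → ℂ)
    (w : ι → ι → ℕ) (e : ι → ℕ) (d0 : ℕ)
    (hw : ∀ u ∈ T, ∀ v ∈ T, w u v = e u + e v + d0) :
    0 ≤ (∑ u ∈ T, ∑ v ∈ T, (starRingEnd ℂ) (c u) * c v * (s (w u v) : ℂ)).re := by
  classical
  set N := T.sup e with hN
  set φ : ι → Fin (N + 1) := fun u => ⟨min (e u) N, by omega⟩ with hφdef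
  have hφval : ∀ u ∈ T, ((φ u : ℕ)) = e u := fun u hu => min_eq_left (Finset.le_sup hu)
  set y : Fin (N + 1) → ℂ := fun k => ∑ u ∈ T.filter (fun u => φ u = k), c u with hy
  have main : (∑ u ∈ T, ∑ v ∈ T, (starRingEnd ℂ) (c u) * c v * (s (w u v) : ℂ))
      = ∑ k, ∑ l, (starRingEnd ℂ) (y k) * y l * (s ((k : ℕ) + (l : ℕ) + d0) : ℂ) := by
    have hinner : ∀ u ∈ T,
        (∑ v ∈ T, (starRingEnd ℂ) (c u) * c v * (s (w u v) : ℂ))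
          = (starRingEnd ℂ) (c u) *
            ((fun k : Fin (N + 1) => ∑ l, y l * (s ((k : ℕ) + (l : ℕ) + d0) : ℂ)) (φ u)) := by
      intro u hu
      have h1 : ∀ v ∈ T, (starRingEnd ℂ) (c u) * c v * (s (w u v) : ℂ)
          = (starRingEnd ℂ) (c u) *
            (c v * (fun l : Fin (N + 1) => ((s ((φ u : ℕ) + (l : ℕ) + d0) : ℝ) : ℂ)) (φ v)) := by
        intro v hv
        have harg : (φ u : ℕ) + (φ v : ℕ) + d0 = e u + e v + d0 := by
          rw [hφval u hu, hφval v hv]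
        show (starRingEnd ℂ) (c u) * c v * (s (w u v) : ℂ)
          = (starRingEnd ℂ) (c u) * (c v * ((s ((φ u : ℕ) + (φ v : ℕ) + d0) : ℝ) : ℂ))
        rw [harg, hw u hu v hv]
        ring
      rw [Finset.sum_congr rfl h1, ← Finset.mul_sum,
        sum_collect T Finset.univ φ (fun _ _ => Finset.mem_univ _) c
          (fun l : Fin (N + 1) => ((s ((φ u : ℕ) + (l : ℕ) + d0) : ℝ) : ℂ))]
    rw [Finset.sum_congr rfl hinner,
      sum_collect T Finset.univ φ (fun _ _ => Finset.mem_univ _)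
        (fun u => (starRingEnd ℂ) (c u))
        (fun k : Fin (N + 1) => ∑ l, y l * (s ((k : ℕ) + (l : ℕ) + d0) : ℂ))]
    refine Finset.sum_congr rfl fun k _ => ?_
    rw [← map_sum (starRingEnd ℂ) _ _]
    have hyk : (starRingEnd ℂ) (∑ u ∈ T.filter (fun u => φ u = k), c u)
        = (starRingEnd ℂ) (y k) := rfl
    rw [hyk, Finset.mul_sum]
    refine Finset.sum_congr rfl fun l _ => by ring
  rw [main]
  exact quad_shift s hE hO d0 N y

end helpers

/-- The hermitian sesquilinear form `⟨z̄^i z^j, z̄^n z^m⟩ = s (i+m) δ_{i−j,n−m}`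
on `ℂ[z, z̄]` (modelled as `MvPolynomial (Fin 2) ℂ` with `z = X 0`, `z̄ = X 1`) is positive
semidefinite if and only if all the Hankel matrices `(s (i+j))` and `(s (i+j+1))` are positive
semidefinite (the Stieltjes moment condition). -/
theorem positivity_iff_stieltjes
    (s : ℕ → ℝ) (hs : ∀ n, 0 < s n)
    (B : MvPolynomial (Fin 2) ℂ → MvPolynomial (Fin 2) ℂ → ℂ)
    (hadd₁ : ∀ p q r, B (p + q) r = B p r + B q r)
    (hadd₂ : ∀ p q r, B p (q + r) = B p q + B p r)
    (hsmul₁ : ∀ (c : ℂ) p q, B (c • p) q = (starRingEnd ℂ) c * B p q)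
    (hsmul₂ : ∀ (c : ℂ) p q, B p (c • q) = c * B p q)
    (hherm : ∀ p q, (starRingEnd ℂ) (B p q) = B q p)
    (hbasis : ∀ i j n m : ℕ,
      B (X 1 ^ i * X 0 ^ j) (X 1 ^ n * X 0 ^ m) =
        if (i : ℤ) - (j : ℤ) = (n : ℤ) - (m : ℤ) then (s (i + m) : ℂ) else 0) :
    (∀ f : MvPolynomial (Fin 2) ℂ, 0 ≤ (B f f).re) ↔
      ((∀ n : ℕ, (Matrix.of fun i j : Fin (n + 1) => s ((i : ℕ) + (j : ℕ))).PosSemidef) ∧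
       (∀ n : ℕ, (Matrix.of fun i j : Fin (n + 1) => s ((i : ℕ) + (j : ℕ) + 1)).PosSemidef)) := by
  classical
  -- bilinearity over finite sums
  have hsum₁ : ∀ {ι : Type} (S : Finset ι) (p : ι → MvPolynomial (Fin 2) ℂ)
      (r : MvPolynomial (Fin 2) ℂ), B (∑ i ∈ S, p i) r = ∑ i ∈ S, B (p i) r := by
    intro ι S p r
    exact map_sum (AddMonoidHom.mk' (fun q => B q r) (fun a b => hadd₁ a b r)) p S
  have hsum₂ : ∀ {ι : Type} (S : Finset ι) (p : MvPolynomial (Fin 2) ℂ)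
      (q : ι → MvPolynomial (Fin 2) ℂ), B p (∑ i ∈ S, q i) = ∑ i ∈ S, B p (q i) := by
    intro ι S p q
    exact map_sum (AddMonoidHom.mk' (fun r => B p r) (fun a b => hadd₂ p a b)) q S
  constructor
  · -- forward: positivity implies Stieltjes condition
    intro hpos
    have expand : ∀ (n e : ℕ) (g : Fin (n + 1) → ℂ),
        B (∑ k, g k • (X 1 ^ ((k : ℕ) + e) * X 0 ^ (k : ℕ)))
          (∑ k, g k • (X 1 ^ ((k : ℕ) + e) * X 0 ^ (k : ℕ)))
        = ∑ k, ∑ l, (starRingEnd ℂ) (g k) * g l * (s ((k : ℕ) + (l : ℕ) + e) : ℂ) := by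
      intro n e g
      rw [hsum₁]
      refine Finset.sum_congr rfl fun k _ => ?_
      rw [hsmul₁, hsum₂, Finset.mul_sum]
      refine Finset.sum_congr rfl fun l _ => ?_
      rw [hsmul₂, hbasis]
      rw [if_pos (by push_cast; ring)]
      have harith : (k : ℕ) + e + (l : ℕ) = (k : ℕ) + (l : ℕ) + e := by ring
      rw [harith]
      ring
    have quad : ∀ (n e : ℕ) (x : Fin (n + 1) → ℝ),
        0 ≤ ∑ k, ∑ l, x k * x l * s ((k : ℕ) + (l : ℕ) + e) := by
      intro n e x
      have h := hpos (∑ k, ((x k : ℂ)) • (X 1 ^ ((k : ℕ) + e) * X 0 ^ (k : ℕ)))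
      rw [expand n e (fun k => (x k : ℂ))] at h
      have : (∑ k : Fin (n+1), ∑ l : Fin (n+1),
          (starRingEnd ℂ) ((x k : ℂ)) * (x l : ℂ) * (s ((k : ℕ) + (l : ℕ) + e) : ℂ)).re
          = ∑ k, ∑ l, x k * x l * s ((k : ℕ) + (l : ℕ) + e) := by
        rw [Complex.re_sum]
        refine Finset.sum_congr rfl fun k _ => ?_
        rw [Complex.re_sum]
        refine Finset.sum_congr rfl fun l _ => ?_
        rw [Complex.conj_ofReal, ← Complex.ofReal_mul, ← Complex.ofReal_mul, Complex.ofReal_re]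
      rw [this] at h
      exact h
    have herm : ∀ (n e : ℕ),
        (Matrix.of fun i j : Fin (n + 1) => s ((i : ℕ) + (j : ℕ) + e)).IsHermitian := by
      intro n e
      ext i j
      simp only [Matrix.conjTranspose_apply, Matrix.of_apply, star_trivial]
      congr 1
      omega
    have hquadform : ∀ (n e : ℕ) (x : Fin (n + 1) → ℝ),
        0 ≤ dotProduct (star x)
          ((Matrix.of fun i j : Fin (n + 1) => s ((i : ℕ) + (j : ℕ) + e)).mulVec x) := by
      intro n e x
      have h := quad n e x
      rw [star_trivial]
      have : dotProduct x
          ((Matrix.of fun i j : Fin (n + 1) => s ((i : ℕ) + (j : ℕ) + e)).mulVec x)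
          = ∑ k, ∑ l, x k * x l * s ((k : ℕ) + (l : ℕ) + e) := by
        simp only [dotProduct, Matrix.mulVec, Finset.mul_sum, Matrix.of_apply]
        refine Finset.sum_congr rfl fun k _ => Finset.sum_congr rfl fun l _ => by ring
      rw [this]
      exact h
    constructor
    · intro n
      refine Matrix.PosSemidef.of_dotProduct_mulVec_nonneg ?_ (fun x => ?_)
      · have h := herm n 0
        simpa using h
      · have h := hquadform n 0 x
        simpa using h
    · intro n
      exact Matrix.PosSemidef.of_dotProduct_mulVec_nonneg (herm n 1) (fun x => hquadform n 1 x)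
  · -- backward: Stieltjes condition implies positivity
    rintro ⟨hE, hO⟩ f
    set S := f.support with hS
    set c : (Fin 2 →₀ ℕ) → ℂ := fun u => coeff u f with hc
    have hf : f = ∑ u ∈ S, c u • (X 1 ^ (u 1) * X 0 ^ (u 0)) := by
      conv_lhs => rw [← support_sum_monomial_coeff f]
      refine Finset.sum_congr rfl fun u _ => ?_
      rw [MvPolynomial.smul_eq_C_mul, monomial_eq]
      congr 1
      rw [Finsupp.prod_pow, Fin.prod_univ_two]
      ring
    set D : (Fin 2 →₀ ℕ) → ℤ := fun u => (u 1 : ℤ) - (u 0 : ℤ) with hD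
    have hBff : B f f = ∑ u ∈ S, ∑ v ∈ S, (starRingEnd ℂ) (c u) * c v *
        (if D u = D v then (s (u 1 + v 0) : ℂ) else 0) := by
      conv_lhs => rw [hf]
      rw [hsum₁]
      refine Finset.sum_congr rfl fun u _ => ?_
      rw [hsmul₁, hsum₂, Finset.mul_sum]
      refine Finset.sum_congr rfl fun v _ => ?_
      rw [hsmul₂, hbasis]
      ring
    have hfib : (∑ u ∈ S, ∑ v ∈ S, (starRingEnd ℂ) (c u) * c v *
          (if D u = D v then (s (u 1 + v 0) : ℂ) else 0))
        = ∑ d ∈ S.image D, ∑ u ∈ S.filter (fun u => D u = d),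
            ∑ v ∈ S.filter (fun v => D v = d),
              (starRingEnd ℂ) (c u) * c v * (s (u 1 + v 0) : ℂ) := by
      rw [← Finset.sum_fiberwise_of_maps_to (fun u hu => Finset.mem_image_of_mem D hu)
        (fun u => ∑ v ∈ S, (starRingEnd ℂ) (c u) * c v *
          (if D u = D v then (s (u 1 + v 0) : ℂ) else 0))]
      refine Finset.sum_congr rfl fun d _ => Finset.sum_congr rfl fun u hu => ?_
      have hud : D u = d := (Finset.mem_filter.mp hu).2
      rw [Finset.sum_filter]
      refine Finset.sum_congr rfl fun v _ => ?_
      rw [mul_ite, mul_zero]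
      exact if_congr (by rw [hud, eq_comm]) rfl rfl
    rw [hBff, hfib, Complex.re_sum]
    refine Finset.sum_nonneg fun d hd => ?_
    set T := S.filter (fun u => D u = d) with hT
    have hmemT : ∀ u ∈ T, (u 1 : ℤ) - (u 0 : ℤ) = d := fun u hu =>
      (Finset.mem_filter.mp hu).2
    rcases le_or_gt 0 d with hd0 | hd0
    · -- d ≥ 0 : u 1 = u 0 + d.toNat, index by u 0
      refine group_nonneg s hE hO T c (fun u v => u 1 + v 0) (fun u => u 0) d.toNat ?_
      intro u hu v hv
      have h1 := hmemT u hu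
      have h2 := hmemT v hv
      show u 1 + v 0 = u 0 + v 0 + d.toNat
      omega
    · -- d < 0 : u 0 = u 1 + (-d).toNat, index by u 1
      refine group_nonneg s hE hO T c (fun u v => u 1 + v 0) (fun u => u 1) (-d).toNat ?_
      intro u hu v hv
      have h1 := hmemT u hu
      have h2 := hmemT v hv
      show u 1 + v 0 = u 1 + v 1 + (-d).toNat
      omega
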